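/- Assume char k = 2 (k algebraically closed). Let σ₁, σ₂, σ₃ denote the elementary symmetric polynomials of degrees 1, 2, 3 in x₀,x₁,x₂,x₃. Then there exist A ∈ GL₄(k) and c ∈ kˣ such that (x₀³ + x₁³ + x₂³ + x₃³)(A·x) = c·(σ₁σ₂ + σ₃)(x). In other words, in characteristic 2 the Fermat cubic surface and the Clebsch cubic surface V(σ₁σ₂ − σ₃) are projectively equivalent. -/

import Mathlib

open MvPolynomial Matrix

/-- The polynomial `F(A·x)`, obtained from `F` by substituting
`xᵢ ↦ ∑ⱼ Aᵢⱼ xⱼ`. -/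
noncomputable def substMatrix {k : Type*} [Field k] (A : Matrix (Fin 4) (Fin 4) k)
    (F : MvPolynomial (Fin 4) k) : MvPolynomial (Fin 4) k :=
  aeval (fun i => ∑ j, C (A i j) * X j) F

lemma powersetCard_one_fin4 :
    (Finset.univ : Finset (Fin 4)).powersetCard 1 =
      ({{0}, {1}, {2}, {3}} : Finset (Finset (Fin 4))) := by decide

lemma powersetCard_two_fin4 :
    (Finset.univ : Finset (Fin 4)).powersetCard 2 =
      ({{0,1}, {0,2}, {0,3}, {1,2}, {1,3}, {2,3}} : Finset (Finset (Fin 4))) := by decide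

lemma powersetCard_three_fin4 :
    (Finset.univ : Finset (Fin 4)).powersetCard 3 =
      ({{0,1,2}, {0,1,3}, {0,2,3}, {1,2,3}} : Finset (Finset (Fin 4))) := by decide

lemma esymm_one_fin4 {k : Type*} [Field k] :
    esymm (Fin 4) k 1 = X 0 + X 1 + X 2 + X 3 := by
  rw [esymm, powersetCard_one_fin4, Finset.sum_insert (by decide),
    Finset.sum_insert (by decide), Finset.sum_insert (by decide), Finset.sum_singleton]
  simp only [Finset.prod_singleton]
  ring

lemma esymm_two_fin4 {k : Type*} [Field k] :
    esymm (Fin 4) k 2 = X 0 * X 1 + X 0 * X 2 + X 0 * X 3 + X 1 * X 2 + X 1 * X 3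
      + X 2 * X 3 := by
  rw [esymm, powersetCard_two_fin4, Finset.sum_insert (by decide),
    Finset.sum_insert (by decide), Finset.sum_insert (by decide),
    Finset.sum_insert (by decide), Finset.sum_insert (by decide), Finset.sum_singleton]
  rw [Finset.prod_insert (by decide), Finset.prod_insert (by decide),
    Finset.prod_insert (by decide), Finset.prod_insert (by decide),
    Finset.prod_insert (by decide), Finset.prod_insert (by decide)]
  simp only [Finset.prod_singleton]
  ring

lemma esymm_three_fin4 {k : Type*} [Field k] :
    esymm (Fin 4) k 3 = X 0 * X 1 * X 2 + X 0 * X 1 * X 3 + X 0 * X 2 * X 3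
      + X 1 * X 2 * X 3 := by
  rw [esymm, powersetCard_three_fin4, Finset.sum_insert (by decide),
    Finset.sum_insert (by decide), Finset.sum_insert (by decide), Finset.sum_singleton]
  rw [Finset.prod_insert (by decide), Finset.prod_insert (by decide),
    Finset.prod_insert (by decide), Finset.prod_insert (by decide),
    Finset.prod_insert (by decide), Finset.prod_insert (by decide),
    Finset.prod_insert (by decide), Finset.prod_insert (by decide)]
  simp only [Finset.prod_singleton]
  ring

set_option maxHeartbeats 2000000 in
/-- In characteristic 2, the Fermat cubic surface
`V(x₀³+x₁³+x₂³+x₃³)` and the Clebsch cubic surface `V(σ₁σ₂ − σ₃)`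
(`= V(σ₁σ₂ + σ₃)` since `char k = 2`) are projectively equivalent. -/
theorem stmt10 {k : Type*} [Field k] [IsAlgClosed k] (hchar : ringChar k = 2) :
    ∃ (A : Matrix (Fin 4) (Fin 4) k) (c : kˣ), IsUnit A.det ∧
      substMatrix A (X 0 ^ 3 + X 1 ^ 3 + X 2 ^ 3 + X 3 ^ 3 :
          MvPolynomial (Fin 4) k) =
        (c : k) • (esymm (Fin 4) k 1 * esymm (Fin 4) k 2 + esymm (Fin 4) k 3) := by
  -- characteristic 2
  have h2 : (2 : k) = 0 := by
    haveI : CharP k 2 := hchar ▸ ringChar.charP k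
    exact_mod_cast CharP.cast_eq_zero k 2
  -- a primitive cube root of unity
  obtain ⟨o, ho⟩ := IsAlgClosed.exists_root
    (Polynomial.X ^ 2 + Polynomial.X + 1 : Polynomial k) (by
      have : (Polynomial.X ^ 2 + Polynomial.X + 1 : Polynomial k).degree = 2 := by
        compute_degree!
      rw [this]; norm_num)
  have hω : o ^ 2 + o + 1 = 0 := by
    simpa [Polynomial.IsRoot] using ho
  set A : Matrix (Fin 4) (Fin 4) k := Matrix.of fun i j => if i = j then 1 + o else o with hA
  have hAA : A * A = 1 := by
    ext i j
    fin_cases i <;> fin_cases j <;>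
      simp [hA, Matrix.mul_apply, Fin.sum_univ_four, Matrix.one_apply] <;>
      linear_combination (o + 2 * o ^ 2) * h2
  refine ⟨A, 1, IsUnit.of_mul_eq_one (a := A.det) A.det (by rw [← Matrix.det_mul, hAA, Matrix.det_one]),
    ?_⟩
  apply MvPolynomial.funext
  intro x
  simp only [substMatrix, map_add, map_pow, aeval_X, map_sum, _root_.map_mul, aeval_C,
    algebraMap_eq, Units.val_one, one_smul, esymm_one_fin4, esymm_two_fin4, esymm_three_fin4,
    eval_add, eval_mul, eval_pow, eval_C, eval_X, Fin.sum_univ_four, hA, Matrix.of_apply,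
    Fin.reduceEq, reduceIte]
  linear_combination (((4:k)*o - 1) * (x 0 + x 1 + x 2 + x 3)^3) * hω +
    ((x 3)^3 + (x 2)*(x 3)^2 + (x 2)^2*(x 3) + (x 2)^3 + (x 1)*(x 3)^2 + (x 1)*(x 2)*(x 3) + (x 1)*(x 2)^2 + (x 1)^2*(x 3) + (x 1)^2*(x 2) + (x 1)^3 + (x 0)*(x 3)^2 + (x 0)*(x 2)*(x 3) + (x 0)*(x 2)^2 + (x 0)*(x 1)*(x 3) + (x 0)*(x 1)*(x 2) + (x 0)*(x 1)^2 + (x 0)^2*(x 3) + (x 0)^2*(x 2) + (x 0)^2*(x 1) + (x 0)^3 + (-3:k)*(o)*(x 2)*(x 3)^2 + (-3:k)*(o)*(x 2)^2*(x 3) + (-3:k)*(o)*(x 1)*(x 3)^2 + (-9:k)*(o)*(x 1)*(x 2)*(x 3) + (-3:k)*(o)*(x 1)*(x 2)^2 + (-3:k)*(o)*(x 1)^2*(x 3) + (-3:k)*(o)*(x 1)^2*(x 2) + (-3:k)*(o)*(x 0)*(x 3)^2 + (-9:k)*(o)*(x 0)*(x 2)*(x 3) + (-3:k)*(o)*(x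 0)*(x 2)^2 + (-9:k)*(o)*(x 0)*(x 1)*(x 3) + (-9:k)*(o)*(x 0)*(x 1)*(x 2) + (-3:k)*(o)*(x 0)*(x 1)^2 + (-3:k)*(o)*(x 0)^2*(x 3) + (-3:k)*(o)*(x 0)^2*(x 2) + (-3:k)*(o)*(x 0)^2*(x 1)) * h2
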